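/- Fix R > 0 and let A ⊆ ℝⁿ be a closed set such that int T_A(z) ≠ ∅ for all z ∈ ∂A ∩ (R+1)𝔹. Then there exist positive numbers β, ε₀, ε₁, …, ε_k, points z₁, …, z_k ∈ ∂A ∩ (R+1)𝔹, and vectors ζ_j ∈ int T_A(z_j) for j = 1, …, k, such that: (i) ⋃_{j=1}^k (z_j + (ε_j/2) int 𝔹) ⊇ (∂A + ε₀𝔹) ∩ (R+1)𝔹; and (ii) for every j = 1, …, k, ζ_j · η < −β for all η ∈ co(N_A(z) ∩ ∂𝔹) and all z ∈ (z_j + ε_j𝔹) ∩ ∂A. -/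

import Mathlib

open Set Filter Topology Metric Pointwise
open scoped RealInnerProductSpace

noncomputable section

variable {H : Type*} [NormedAddCommGroup H] [InnerProductSpace ℝ H]

/-- The Clarke tangent cone to `A` at `x`. -/
def clarkeTangentCone (A : Set H) (x : H) : Set H :=
  {ξ | ∀ (xs : ℕ → H) (ts : ℕ → ℝ), (∀ i, xs i ∈ A) → Tendsto xs atTop (𝓝 x) →
      (∀ i, 0 < ts i) → Tendsto ts atTop (𝓝 0) →
      ∃ as : ℕ → H, (∀ i, as i ∈ A) ∧
        Tendsto (fun i => (ts i)⁻¹ • (as i - xs i)) atTop (𝓝 ξ)}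

/-- The proximal normal cone to `A` at `x`. -/
def proxNormalCone (A : Set H) (x : H) : Set H :=
  {η | ∃ M > 0, ∀ y ∈ A, ⟪η, y - x⟫ ≤ M * ‖y - x‖ ^ 2}

/-- The limiting normal cone to `A` at `x`. -/
def limitingNormalCone (A : Set H) (x : H) : Set H :=
  {η | ∃ xs ηs : ℕ → H, (∀ i, xs i ∈ A) ∧ (∀ i, ηs i ∈ proxNormalCone A (xs i)) ∧
    Tendsto xs atTop (𝓝 x) ∧ Tendsto ηs atTop (𝓝 η)}

theorem aux_smul_prox {A : Set H} {x η : H} {c : ℝ} (hc : 0 < c)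
    (h : η ∈ proxNormalCone A x) : c • η ∈ proxNormalCone A x := by
  obtain ⟨M, hM, hineq⟩ := h
  refine ⟨c * M, by positivity, fun y hy => ?_⟩
  rw [real_inner_smul_left, mul_assoc]
  exact mul_le_mul_of_nonneg_left (hineq y hy) hc.le

theorem aux_polarity {A : Set H} {z ξ η : H}
    (hξ : ξ ∈ clarkeTangentCone A z) (hη : η ∈ limitingNormalCone A z) :
    ⟪ξ, η⟫ ≤ 0 := by
  obtain ⟨xs, ηs, hxsA, hηsP, hxs, hηs⟩ := hη
  choose M hMpos hM using hηsP
  set ts : ℕ → ℝ := fun i => min (((i : ℝ) + 1)⁻¹) (((i : ℝ) + 1)⁻¹ * (M i)⁻¹) with hts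
  have htspos : ∀ i, 0 < ts i := fun i => by
    have h1 : (0:ℝ) < (i:ℝ) + 1 := by positivity
    have h2 := hMpos i
    exact lt_min (by positivity) (by positivity)
  have htsle : ∀ i, ts i ≤ ((i : ℝ) + 1)⁻¹ := fun i => min_le_left _ _
  have hone : Tendsto (fun i : ℕ => ((i : ℝ) + 1)⁻¹) atTop (𝓝 0) := by
    simpa [one_div] using tendsto_one_div_add_atTop_nhds_zero_nat (𝕜 := ℝ)
  have hts0 : Tendsto ts atTop (𝓝 0) := by
    refine squeeze_zero (fun i => (htspos i).le) htsle hone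
  obtain ⟨as, hasA, hv⟩ := hξ xs ts hxsA hxs htspos hts0
  set v : ℕ → H := fun i => (ts i)⁻¹ • (as i - xs i) with hvdef
  have key : ∀ i, ⟪ηs i, v i⟫ ≤ ((i : ℝ) + 1)⁻¹ * ‖v i‖ ^ 2 := by
    intro i
    have hMi := hM i (as i) (hasA i)
    have htne : ts i ≠ 0 := (htspos i).ne'
    have hsub : as i - xs i = ts i • v i := (smul_inv_smul₀ htne _).symm
    have hnorm : ‖as i - xs i‖ = ts i * ‖v i‖ := by
      rw [hsub, norm_smul, Real.norm_eq_abs, abs_of_pos (htspos i)]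
    have h4 : M i * ts i ≤ ((i : ℝ) + 1)⁻¹ := by
      have hmr := min_le_right (((i : ℝ) + 1)⁻¹) (((i : ℝ) + 1)⁻¹ * (M i)⁻¹)
      calc M i * ts i ≤ M i * (((i : ℝ) + 1)⁻¹ * (M i)⁻¹) :=
            mul_le_mul_of_nonneg_left hmr (hMpos i).le
        _ = ((i : ℝ) + 1)⁻¹ := by
            rw [mul_comm (((i : ℝ) + 1)⁻¹), ← mul_assoc, mul_inv_cancel₀ (hMpos i).ne', one_mul]
    calc ⟪ηs i, v i⟫ = (ts i)⁻¹ * ⟪ηs i, as i - xs i⟫ := by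
          rw [hvdef]; simp [real_inner_smul_right]
      _ ≤ (ts i)⁻¹ * (M i * ‖as i - xs i‖ ^ 2) :=
          mul_le_mul_of_nonneg_left hMi (inv_pos.2 (htspos i)).le
      _ = (M i * ts i) * ‖v i‖ ^ 2 := by
          rw [hnorm]; field_simp
      _ ≤ ((i : ℝ) + 1)⁻¹ * ‖v i‖ ^ 2 := mul_le_mul_of_nonneg_right h4 (sq_nonneg _)
  have h1 : Tendsto (fun i => ⟪ηs i, v i⟫) atTop (𝓝 ⟪η, ξ⟫) := hηs.inner hv
  have hnv : Tendsto (fun i => ‖v i‖ ^ 2) atTop (𝓝 (‖ξ‖ ^ 2)) := by have h := hv.norm; exact h.pow 2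
  have h2 : Tendsto (fun i : ℕ => ((i : ℝ) + 1)⁻¹ * ‖v i‖ ^ 2) atTop (𝓝 0) := by
    simpa using hone.mul hnv
  have := le_of_tendsto_of_tendsto' h1 h2 key
  rwa [real_inner_comm] at this

theorem aux_local {n : ℕ} {A : Set (EuclideanSpace ℝ (Fin n))} (hA : IsClosed A)
    {z ζ : EuclideanSpace ℝ (Fin n)}
    (hζ : ζ ∈ interior (clarkeTangentCone A z)) :
    ∃ ε > 0, ∃ β > 0, ∀ z' ∈ closedBall z ε ∩ frontier A,
      ∀ η ∈ convexHull ℝ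
        (limitingNormalCone A z' ∩ sphere (0 : EuclideanSpace ℝ (Fin n)) 1),
      ⟪ζ, η⟫ < -β := by
  obtain ⟨δ, hδ, hball⟩ := Metric.mem_nhds_iff.1 (mem_interior_iff_mem_nhds.1 hζ)
  have hballT : ball ζ δ ⊆ clarkeTangentCone A z := hball
  -- Step B : limiting unit normals at z
  have hB : ∀ η ∈ limitingNormalCone A z, ‖η‖ = 1 → ⟪ζ, η⟫ ≤ -(δ / 2) := by
    intro η hη hnorm
    have hmem : ζ + (δ / 2) • η ∈ clarkeTangentCone A z := by
      apply hballT
      rw [mem_ball, dist_eq_norm]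
      have : ζ + (δ / 2) • η - ζ = (δ / 2) • η := by abel
      rw [this, norm_smul, Real.norm_eq_abs, abs_of_pos (by linarith), hnorm]
      linarith
    have hp := aux_polarity hmem hη
    rw [inner_add_left, real_inner_smul_left, real_inner_self_eq_norm_sq, hnorm] at hp
    nlinarith
  -- Step C : uniform bound on unit proximal normals near z
  have hC : ∃ r > 0, ∀ x ∈ A, x ∈ closedBall z r →
      ∀ η ∈ proxNormalCone A x, ‖η‖ = 1 → ⟪ζ, η⟫ ≤ -(δ / 4) := by
    by_contra hcon
    push_neg at hcon
    have hsel : ∀ m : ℕ, ∃ x ∈ A, x ∈ closedBall z (((m : ℝ) + 1)⁻¹) ∧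
        ∃ η ∈ proxNormalCone A x, ‖η‖ = 1 ∧ -(δ / 4) < ⟪ζ, η⟫ := by
      intro m
      obtain ⟨x, hx1, hx2, η, hη1, hη2, hη3⟩ := hcon (((m : ℝ) + 1)⁻¹) (by positivity)
      exact ⟨x, hx1, hx2, η, hη1, hη2, hη3⟩
    choose x hxA hxball η hηP hηnorm hηinner using hsel
    have hηsphere : ∀ m, η m ∈ sphere (0 : EuclideanSpace ℝ (Fin n)) 1 := fun m =>
      mem_sphere_zero_iff_norm.2 (hηnorm m)
    obtain ⟨ηlim, hηlims, φ, hφ, hηto⟩ :=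
      (isCompact_sphere (0 : EuclideanSpace ℝ (Fin n)) 1).tendsto_subseq hηsphere
    have hone : Tendsto (fun m : ℕ => ((m : ℝ) + 1)⁻¹) atTop (𝓝 0) := by
      simpa [one_div] using tendsto_one_div_add_atTop_nhds_zero_nat (𝕜 := ℝ)
    have hxz : Tendsto (fun m => x (φ m)) atTop (𝓝 z) := by
      rw [tendsto_iff_dist_tendsto_zero]
      refine squeeze_zero (fun m => dist_nonneg) (fun m => ?_) hone
      have h1 : dist (x (φ m)) z ≤ ((φ m : ℝ) + 1)⁻¹ := mem_closedBall.1 (hxball (φ m))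
      refine h1.trans ?_
      have hm : m ≤ φ m := hφ.le_apply
      have hmr : (m : ℝ) ≤ (φ m : ℝ) := Nat.cast_le.2 hm
      exact inv_anti₀ (by positivity) (by linarith)
    have hηlimmem : ηlim ∈ limitingNormalCone A z :=
      ⟨fun m => x (φ m), fun m => η (φ m), fun m => hxA (φ m), fun m => hηP (φ m), hxz, hηto⟩
    have hηlimnorm : ‖ηlim‖ = 1 := mem_sphere_zero_iff_norm.1 hηlims
    have hupper := hB ηlim hηlimmem hηlimnorm
    have hlower : -(δ / 4) ≤ ⟪ζ, ηlim⟫ := by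
      have htinner : Tendsto (fun m => ⟪ζ, η (φ m)⟫) atTop (𝓝 ⟪ζ, ηlim⟫) :=
        (tendsto_const_nhds (x := ζ)).inner hηto
      exact ge_of_tendsto htinner (Eventually.of_forall fun m => (hηinner (φ m)).le)
    linarith
  obtain ⟨r, hr, hCr⟩ := hC
  refine ⟨r / 2, by linarith, δ / 8, by linarith, ?_⟩
  intro z' hz' η hη
  obtain ⟨hz'ball, hz'front⟩ := hz'
  have hkey : ∀ η' ∈ limitingNormalCone A z' ∩ sphere (0 : EuclideanSpace ℝ (Fin n)) 1,
      ⟪ζ, η'⟫ ≤ -(δ / 4) := by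
    rintro η' ⟨hη'l, hη's⟩
    obtain ⟨xs, ηs, hxsA, hηsP, hxsto, hηsto⟩ := hη'l
    have hη'norm : ‖η'‖ = 1 := mem_sphere_zero_iff_norm.1 hη's
    have hev1 : ∀ᶠ i in atTop, xs i ∈ closedBall z r := by
      have hball' : ∀ᶠ i in atTop, xs i ∈ ball z' (r / 2) :=
        hxsto (ball_mem_nhds z' (by linarith))
      filter_upwards [hball'] with i hi
      rw [mem_closedBall]
      have h1 : dist (xs i) z' < r / 2 := mem_ball.1 hi
      have h2 : dist z' z ≤ r / 2 := mem_closedBall.1 hz'ball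
      calc dist (xs i) z ≤ dist (xs i) z' + dist z' z := dist_triangle _ _ _
        _ ≤ r := by linarith
    have hev2 : ∀ᶠ i in atTop, (1 : ℝ) / 2 < ‖ηs i‖ := by
      have := hηsto.norm
      rw [hη'norm] at this
      exact this.eventually (eventually_gt_nhds (by norm_num))
    have hevle : ∀ᶠ i in atTop, ⟪ζ, ηs i⟫ ≤ ‖ηs i‖ * (-(δ / 4)) := by
      filter_upwards [hev1, hev2] with i hi1 hi2
      have hpos : 0 < ‖ηs i‖ := by linarith
      have hu : ‖ηs i‖⁻¹ • ηs i ∈ proxNormalCone A (xs i) :=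
        aux_smul_prox (inv_pos.2 hpos) (hηsP i)
      have hunorm : ‖‖ηs i‖⁻¹ • ηs i‖ = 1 := by
        rw [norm_smul, Real.norm_eq_abs, abs_of_pos (inv_pos.2 hpos),
          inv_mul_cancel₀ hpos.ne']
      have := hCr (xs i) (hxsA i) hi1 _ hu hunorm
      rw [real_inner_smul_right] at this
      calc ⟪ζ, ηs i⟫ = ‖ηs i‖ * (‖ηs i‖⁻¹ * ⟪ζ, ηs i⟫) := by
            field_simp
        _ ≤ ‖ηs i‖ * (-(δ / 4)) := mul_le_mul_of_nonneg_left this hpos.le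
    have hlim1 : Tendsto (fun i => ⟪ζ, ηs i⟫) atTop (𝓝 ⟪ζ, η'⟫) :=
      (tendsto_const_nhds (x := ζ)).inner hηsto
    have hlim2 : Tendsto (fun i => ‖ηs i‖ * (-(δ / 4))) atTop (𝓝 (-(δ / 4))) := by
      have := hηsto.norm.mul_const (-(δ / 4))
      rwa [hη'norm, one_mul] at this
    exact le_of_tendsto_of_tendsto hlim1 hlim2 hevle
  have hhalf : convexHull ℝ
      (limitingNormalCone A z' ∩ sphere (0 : EuclideanSpace ℝ (Fin n)) 1) ⊆
      {x | ⟪ζ, x⟫ ≤ -(δ / 4)} := by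
    apply convexHull_min hkey
    intro a ha b hb p q hp hq hpq
    have ha' : ⟪ζ, a⟫ ≤ -(δ / 4) := ha
    have hb' : ⟪ζ, b⟫ ≤ -(δ / 4) := hb
    show ⟪ζ, p • a + q • b⟫ ≤ -(δ / 4)
    rw [inner_add_right, real_inner_smul_right, real_inner_smul_right]
    nlinarith
  have := hhalf hη
  simp only [mem_setOf_eq] at this
  linarith

theorem aux_eps0 {n : ℕ} {A : Set (EuclideanSpace ℝ (Fin n))} {R : ℝ}
    {U : Set (EuclideanSpace ℝ (Fin n))} (hU : IsOpen U)
    (hcov : frontier A ∩ closedBall (0 : EuclideanSpace ℝ (Fin n)) (R + 1) ⊆ U) :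
    ∃ ε₀ > 0, (frontier A + closedBall (0 : EuclideanSpace ℝ (Fin n)) ε₀) ∩
      closedBall (0 : EuclideanSpace ℝ (Fin n)) (R + 1) ⊆ U := by
  by_cases hF : (frontier A).Nonempty
  · set S := closedBall (0 : EuclideanSpace ℝ (Fin n)) (R + 1) \ U with hS
    have hSclosed : IsClosed S := (isClosed_closedBall).inter hU.isClosed_compl
    have hScomp : IsCompact S :=
      (isCompact_closedBall _ _).of_isClosed_subset hSclosed diff_subset
    by_cases hSne : S.Nonempty
    · obtain ⟨y₀, hy₀S, hy₀min⟩ :=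
        hScomp.exists_isMinOn hSne (continuous_infDist_pt (frontier A)).continuousOn
      have hy₀notin : y₀ ∉ frontier A := by
        intro hmem
        exact hy₀S.2 (hcov ⟨hmem, hy₀S.1⟩)
      have hd : 0 < infDist y₀ (frontier A) :=
        (isClosed_frontier.notMem_iff_infDist_pos hF).1 hy₀notin
      refine ⟨infDist y₀ (frontier A) / 2, by linarith, ?_⟩
      rintro y ⟨hy1, hy2⟩
      obtain ⟨a, ha, b, hb, rfl⟩ := Set.mem_add.1 hy1
      by_contra hyU
      have hyS : a + b ∈ S := ⟨hy2, hyU⟩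
      have h1 : infDist y₀ (frontier A) ≤ infDist (a + b) (frontier A) := hy₀min hyS
      have h2 : infDist (a + b) (frontier A) ≤ dist (a + b) a := infDist_le_dist_of_mem ha
      have h3 : dist (a + b) a = ‖b‖ := by
        rw [dist_eq_norm]; simp
      have h4 : ‖b‖ ≤ infDist y₀ (frontier A) / 2 := by
        simpa [mem_closedBall, dist_eq_norm] using hb
      linarith
    · refine ⟨1, one_pos, fun y hy => ?_⟩
      by_contra hyU
      exact hSne ⟨y, hy.2, hyU⟩
  · refine ⟨1, one_pos, fun y hy => ?_⟩
    obtain ⟨a, ha, b, hb, rfl⟩ := Set.mem_add.1 hy.1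
    exact absurd ⟨a, ha⟩ hF

theorem main_thm
    {n : ℕ} (R : ℝ) (hR : 0 < R) (A : Set (EuclideanSpace ℝ (Fin n))) (hA : IsClosed A)
    (hCQ : ∀ z ∈ frontier A ∩ closedBall (0 : EuclideanSpace ℝ (Fin n)) (R + 1),
      (interior (clarkeTangentCone A z)).Nonempty) :
    ∃ (k : ℕ) (β ε₀ : ℝ) (ε : Fin k → ℝ) (zs ζ : Fin k → EuclideanSpace ℝ (Fin n)),
      0 < β ∧ 0 < ε₀ ∧ (∀ j, 0 < ε j) ∧
      (∀ j, zs j ∈ frontier A ∩ closedBall (0 : EuclideanSpace ℝ (Fin n)) (R + 1)) ∧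
      (∀ j, ζ j ∈ interior (clarkeTangentCone A (zs j))) ∧
      ((frontier A + closedBall (0 : EuclideanSpace ℝ (Fin n)) ε₀) ∩
          closedBall (0 : EuclideanSpace ℝ (Fin n)) (R + 1) ⊆
        ⋃ j, ball (zs j) (ε j / 2)) ∧
      (∀ j, ∀ z ∈ closedBall (zs j) (ε j) ∩ frontier A,
        ∀ η ∈ convexHull ℝ
          (limitingNormalCone A z ∩ sphere (0 : EuclideanSpace ℝ (Fin n)) 1),
        ⟪ζ j, η⟫ < -β) := by
  set K : Set (EuclideanSpace ℝ (Fin n)) :=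
    frontier A ∩ closedBall (0 : EuclideanSpace ℝ (Fin n)) (R + 1) with hKdef
  by_cases hKne : K.Nonempty
  · -- choose data at each point of K
    have hchoice : ∀ w : K, ∃ ζ₀, ζ₀ ∈ interior (clarkeTangentCone A (w : EuclideanSpace ℝ (Fin n))) :=
      fun w => hCQ w w.2
    choose ζf hζf using hchoice
    have hloc : ∀ w : K, ∃ ε > 0, ∃ β > 0,
        ∀ z' ∈ closedBall (w : EuclideanSpace ℝ (Fin n)) ε ∩ frontier A,
        ∀ η ∈ convexHull ℝ
          (limitingNormalCone A z' ∩ sphere (0 : EuclideanSpace ℝ (Fin n)) 1),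
        ⟪ζf w, η⟫ < -β := fun w => aux_local hA (hζf w)
    choose εf hεf βf hβf hPf using hloc
    have hKcomp : IsCompact K := (isCompact_closedBall _ _).inter_left isClosed_frontier
    have hKsub : K ⊆ ⋃ w : K, ball (w : EuclideanSpace ℝ (Fin n)) (εf w / 2) := by
      intro w hw
      exact mem_iUnion.2 ⟨⟨w, hw⟩, mem_ball_self (by linarith [hεf ⟨w, hw⟩])⟩
    obtain ⟨t, ht⟩ := hKcomp.elim_finite_subcover
      (fun w : K => ball (w : EuclideanSpace ℝ (Fin n)) (εf w / 2))
      (fun w => isOpen_ball) hKsub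
    -- t is nonempty
    have htne : t.Nonempty := by
      obtain ⟨w, hw⟩ := hKne
      obtain ⟨i, hit, _⟩ := mem_iUnion₂.1 (ht hw)
      exact ⟨i, hit⟩
    set k := t.card with hk
    have hkpos : 0 < k := Finset.card_pos.2 htne
    have : Nonempty (Fin k) := ⟨⟨0, hkpos⟩⟩
    set e := t.equivFin with he
    set zf : Fin k → K := fun j => (e.symm j : K) with hzf
    set zs : Fin k → EuclideanSpace ℝ (Fin n) := fun j => (zf j : EuclideanSpace ℝ (Fin n))
    set ε : Fin k → ℝ := fun j => εf (zf j)
    set ζ : Fin k → EuclideanSpace ℝ (Fin n) := fun j => ζf (zf j)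
    set β : ℝ := Finset.univ.inf' Finset.univ_nonempty (fun j : Fin k => βf (zf j)) with hβ
    have hβpos : 0 < β := by
      rw [hβ, Finset.lt_inf'_iff]
      exact fun j _ => hβf (zf j)
    have hβle : ∀ j : Fin k, β ≤ βf (zf j) := fun j =>
      Finset.inf'_le _ (Finset.mem_univ j)
    -- the union of balls is open and covers K
    have hKcov : K ⊆ ⋃ j : Fin k, ball (zs j) (ε j / 2) := by
      intro w hw
      obtain ⟨i, hit, hwi⟩ := mem_iUnion₂.1 (ht hw)
      refine mem_iUnion.2 ⟨e ⟨i, hit⟩, ?_⟩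
      have : zf (e ⟨i, hit⟩) = i := by
        simp only [hzf, Equiv.symm_apply_apply]
      rw [show zs (e ⟨i, hit⟩) = (i : EuclideanSpace ℝ (Fin n)) by simp [zs, this],
        show ε (e ⟨i, hit⟩) = εf i by simp [ε, this]]
      exact hwi
    obtain ⟨ε₀, hε₀, hε₀cov⟩ := aux_eps0 (U := ⋃ j : Fin k, ball (zs j) (ε j / 2))
      (isOpen_iUnion fun j => isOpen_ball) hKcov
    refine ⟨k, β, ε₀, ε, zs, ζ, hβpos, hε₀, fun j => hεf (zf j), fun j => (zf j).2,
      fun j => hζf (zf j), hε₀cov, ?_⟩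
    intro j z hz η hη
    have := hPf (zf j) z hz η hη
    have hb := hβle j
    linarith
  · -- K is empty
    obtain ⟨ε₀, hε₀, hε₀cov⟩ := aux_eps0 (U := (∅ : Set (EuclideanSpace ℝ (Fin n))))
      isOpen_empty (by rw [← hKdef]; intro w hw; exact absurd ⟨w, hw⟩ hKne)
    refine ⟨0, 1, ε₀, Fin.elim0, Fin.elim0, Fin.elim0, one_pos, hε₀,
      fun j => j.elim0, fun j => j.elim0, fun j => j.elim0, ?_, fun j => j.elim0⟩
    refine hε₀cov.trans ?_
    simp

/-- Lemma 2: if `int T_A(z) ≠ ∅` for every `z ∈ ∂A ∩ (R+1)𝔹`, then there are finitely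
many points `z_j ∈ ∂A ∩ (R+1)𝔹`, radii `ε_j > 0`, vectors `ζ_j ∈ int T_A(z_j)`, and
constants `β, ε₀ > 0`, such that the balls `z_j + (ε_j/2) int 𝔹` cover
`(∂A + ε₀ 𝔹) ∩ (R+1)𝔹` and `ζ_j · η < -β` for every unit limiting normal direction
`η ∈ co (N_A(z) ∩ ∂𝔹)` at every `z ∈ (z_j + ε_j 𝔹) ∩ ∂A`. -/
theorem finite_cover_of_interior_clarkeTangentCone_nonempty
    {n : ℕ} (R : ℝ) (hR : 0 < R) (A : Set (EuclideanSpace ℝ (Fin n))) (hA : IsClosed A)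
    (hCQ : ∀ z ∈ frontier A ∩ closedBall (0 : EuclideanSpace ℝ (Fin n)) (R + 1),
      (interior (clarkeTangentCone A z)).Nonempty) :
    ∃ (k : ℕ) (β ε₀ : ℝ) (ε : Fin k → ℝ) (zs ζ : Fin k → EuclideanSpace ℝ (Fin n)),
      0 < β ∧ 0 < ε₀ ∧ (∀ j, 0 < ε j) ∧
      (∀ j, zs j ∈ frontier A ∩ closedBall (0 : EuclideanSpace ℝ (Fin n)) (R + 1)) ∧
      (∀ j, ζ j ∈ interior (clarkeTangentCone A (zs j))) ∧
      ((frontier A + closedBall (0 : EuclideanSpace ℝ (Fin n)) ε₀) ∩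
          closedBall (0 : EuclideanSpace ℝ (Fin n)) (R + 1) ⊆
        ⋃ j, ball (zs j) (ε j / 2)) ∧
      (∀ j, ∀ z ∈ closedBall (zs j) (ε j) ∩ frontier A,
        ∀ η ∈ convexHull ℝ
          (limitingNormalCone A z ∩ sphere (0 : EuclideanSpace ℝ (Fin n)) 1),
        ⟪ζ j, η⟫ < -β) := by
  exact main_thm R hR A hA hCQ
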